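/- Let d be a squarefree positive integer with discriminant Δ_d > 4·15², let F = ℚ(√d), and let L be a positive definite classic quadratic 𝒪_F-lattice with quadratic map Q and associated bilinear form B. Let S = { v ∈ L : Q(v) ∈ ℤ and 1 ≤ Q(v) ≤ 15 } and let L₁ be the ℤ-submodule of L generated by S. Then B(L₁, L₁) ⊆ ℤ, i.e., B(x,y) is a rational integer for all x, y ∈ L₁. -/

import Mathlib

noncomputable section

/-- `Δ_d`: the discriminant of `ℚ(√d)` for squarefree `d > 1`. -/
def Delta (d : ℕ) : ℕ := if d % 4 = 1 then d else 4 * d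

/-- `ω_d`, viewed as a real number (with `√d > 0`). -/
def omegaR (d : ℕ) : ℝ := if d % 4 = 1 then (1 + Real.sqrt d) / 2 else Real.sqrt d

/-- The conjugate `ω̄_d`, viewed as a real number. -/
def omegaConjR (d : ℕ) : ℝ := if d % 4 = 1 then (1 - Real.sqrt d) / 2 else -Real.sqrt d

/-- `F = ℚ(√d)`, realized as an intermediate field of `ℝ/ℚ` via the embedding with `√d > 0`. -/
def Fd (d : ℕ) : IntermediateField ℚ ℝ := IntermediateField.adjoin ℚ {Real.sqrt d}

/-- The ring of integers `𝒪_F` of `F = ℚ(√d)`. -/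
abbrev Od (d : ℕ) := NumberField.RingOfIntegers (Fd d)

/-- An element of `F` is totally positive if its image under each of the
(two) real embeddings of `F` is positive. -/
def TotPos {d : ℕ} (x : Fd d) : Prop := ∀ σ : Fd d →ₐ[ℚ] ℝ, 0 < σ x

/-- The conjugate `x̄` of `x ∈ F = ℚ(√d)`, as a real number: `x̄ = tr(x) - x`. -/
def conjR {d : ℕ} (x : Fd d) : ℝ := ((Algebra.trace ℚ (Fd d) x : ℚ) : ℝ) - (x : ℝ)

/-- A (not necessarily classic) quadratic `𝒪_F`-lattice: a finitely generated
`𝒪_F`-module `L` with a quadratic map `Q : L → 𝒪_F` whose associated form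
`B(x,y) = (Q(x+y)-Q(x)-Q(y))/2` (with values a priori in `F`) is symmetric
bilinear and satisfies `B(x,x) = Q(x)`. -/
structure QuadLattice (d : ℕ) where
  carrier : Type
  [isAddCommGroup : AddCommGroup carrier]
  [isModule : Module (Od d) carrier]
  finite : Module.Finite (Od d) carrier
  Q : carrier → Od d
  B : carrier → carrier → Fd d
  B_symm : ∀ x y, B x y = B y x
  B_add_left : ∀ x y z, B (x + y) z = B x z + B y z
  B_smul_left : ∀ (a : Od d) (x y : carrier), B (a • x) y = (a : Fd d) * B x y
  B_self : ∀ x, B x x = (Q x : Fd d)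
  B_def : ∀ x y, 2 * B x y = (Q (x + y) : Fd d) - (Q x : Fd d) - (Q y : Fd d)

attribute [instance] QuadLattice.isAddCommGroup QuadLattice.isModule

namespace QuadLattice

variable {d : ℕ} (L : QuadLattice d)

/-- `L` is classic if the bilinear form takes values in `𝒪_F`. -/
def IsClassic : Prop := ∀ x y, L.B x y ∈ integralClosure ℤ (Fd d)

/-- `L` is positive definite if `Q(x)` is totally positive for all `x ≠ 0`. -/
def PosDef : Prop := ∀ x : L.carrier, x ≠ 0 → TotPos (L.Q x : Fd d)

/-- `L` is universal if `Q(L) = 𝒪_F⁺ ∪ {0}`. -/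
def Universal : Prop :=
  (Set.range fun v => L.Q v) = {a : Od d | TotPos (a : Fd d)} ∪ {0}

end QuadLattice

open Polynomial IntermediateField

namespace SpanAux

variable (d : ℕ)

lemma sq_sqrtd : (Real.sqrt d) ^ 2 = (d:ℝ) := Real.sq_sqrt (by positivity)

lemma irr (hd : Squarefree d) (hd1 : 1 < d) : Irrational (Real.sqrt d) := by
  rw [irrational_sqrt_natCast_iff]
  rintro ⟨r, hr⟩
  have := hd r (by rw [hr])
  rw [Nat.isUnit_iff] at this
  simp [this] at hr
  omega

lemma sqrtd_int : IsIntegral ℚ (Real.sqrt d) := by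
  refine ⟨X ^ 2 - C (d:ℚ), monic_X_pow_sub_C _ (by norm_num), ?_⟩
  have : (Real.sqrt d) ^ 2 = (d:ℝ) := sq_sqrtd d
  simp [eval₂_sub, eval₂_pow, this]

lemma minpoly_sqrtd (hd : Squarefree d) (hd1 : 1 < d) :
    minpoly ℚ (Real.sqrt d) = X ^ 2 - C (d:ℚ) := by
  have hint := sqrtd_int d
  have hroot : aeval (Real.sqrt d) (X ^ 2 - C (d:ℚ)) = 0 := by
    simp [sq_sqrtd d]
  obtain ⟨q, hq⟩ := minpoly.dvd ℚ (Real.sqrt d) hroot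
  have hm : (X ^ 2 - C (d:ℚ)).Monic := monic_X_pow_sub_C _ (by norm_num)
  have hpm : (minpoly ℚ (Real.sqrt d)).Monic := minpoly.monic hint
  have hdg2 : (X ^ 2 - C (d:ℚ)).natDegree = 2 := by
    simpa using natDegree_X_pow_sub_C (n := 2) (r := (d:ℚ))
  have hle : (minpoly ℚ (Real.sqrt d)).natDegree ≤ 2 := by
    rw [← hdg2]
    exact natDegree_le_of_dvd ⟨q, hq⟩ hm.ne_zero
  have hpos : 0 < (minpoly ℚ (Real.sqrt d)).natDegree := minpoly.natDegree_pos hint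
  have hne1 : (minpoly ℚ (Real.sqrt d)).natDegree ≠ 1 := by
    intro h1
    have hdeg1 : (minpoly ℚ (Real.sqrt d)).degree = 1 := by
      rw [degree_eq_natDegree hpm.ne_zero, h1]; rfl
    obtain ⟨r, hr⟩ := minpoly.degree_eq_one_iff.mp hdeg1
    exact irr d hd hd1 ⟨r, by rw [← hr]; simp [eq_ratCast]⟩
  have hdeq : (minpoly ℚ (Real.sqrt d)).natDegree = 2 := by omega
  have hqm : q.Monic := hpm.of_mul_monic_left (hq ▸ hm)
  have hq0 : q.natDegree = 0 := by
    have := natDegree_mul hpm.ne_zero hqm.ne_zero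
    rw [← hq, hdg2, hdeq] at this
    omega
  have : q = 1 := eq_one_of_monic_natDegree_zero hqm hq0
  rw [hq, this, mul_one]

/-- The power basis of `Fd d`. -/
def pb : PowerBasis ℚ (Fd d) := IntermediateField.adjoin.powerBasis (sqrtd_int d)

lemma pb_dim (hd : Squarefree d) (hd1 : 1 < d) : (pb d).dim = 2 := by
  show (minpoly ℚ (Real.sqrt d)).natDegree = 2
  rw [minpoly_sqrtd d hd hd1]
  simpa using natDegree_X_pow_sub_C (n := 2) (r := (d:ℚ))

lemma pb_gen_coe : ((pb d).gen : ℝ) = Real.sqrt d := by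
  show ((IntermediateField.AdjoinSimple.gen ℚ (Real.sqrt d) : ℚ⟮Real.sqrt d⟯) : ℝ) = Real.sqrt d
  rfl

lemma root_neg (hd : Squarefree d) (hd1 : 1 < d) :
    aeval (-Real.sqrt d) (minpoly ℚ (pb d).gen) = 0 := by
  have : (pb d).gen = IntermediateField.AdjoinSimple.gen ℚ (Real.sqrt d) :=
    IntermediateField.adjoin.powerBasis_gen _
  have hm : minpoly ℚ (pb d).gen = minpoly ℚ (Real.sqrt d) := by
    rw [this]; exact IntermediateField.minpoly_gen (F := ℚ) (Real.sqrt d)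
  rw [hm, minpoly_sqrtd d hd hd1]
  simp [sq_sqrtd d]

/-- The conjugation embedding `Fd d →ₐ[ℚ] ℝ` sending `√d` to `-√d`. -/
def sigma' (hd : Squarefree d) (hd1 : 1 < d) : Fd d →ₐ[ℚ] ℝ :=
  (pb d).lift (-Real.sqrt d) (root_neg d hd hd1)

lemma sigma'_gen (hd : Squarefree d) (hd1 : 1 < d) :
    sigma' d hd hd1 (pb d).gen = -Real.sqrt d :=
  PowerBasis.lift_gen _ _ _

lemma coords (hd : Squarefree d) (hd1 : 1 < d) (x : Fd d) :
    ∃ a b : ℚ, (x : ℝ) = a + b * Real.sqrt d ∧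
      sigma' d hd hd1 x = a - b * Real.sqrt d := by
  have hdim : (pb d).dim = 2 := pb_dim d hd hd1
  set b2 : Module.Basis (Fin 2) ℚ (Fd d) := (pb d).basis.reindex (finCongr hdim) with hb2
  have hb0 : b2 0 = 1 := by
    simp [hb2, Module.Basis.reindex_apply, PowerBasis.coe_basis]
  have hb1 : b2 1 = (pb d).gen := by
    simp [hb2, Module.Basis.reindex_apply, PowerBasis.coe_basis]
  have hsum := b2.sum_repr x
  rw [Fin.sum_univ_two, hb0, hb1] at hsum
  obtain ⟨a, b, hab⟩ : ∃ a b : ℚ, x = a • 1 + b • (pb d).gen := ⟨_, _, hsum.symm⟩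
  refine ⟨a, b, ?_, ?_⟩
  · rw [hab]
    push_cast
    rw [Rat.smul_def, Rat.smul_def, pb_gen_coe d]
    ring
  · rw [hab]
    simp only [map_add, map_smul, map_mul, Rat.smul_def, map_ratCast, map_one,
      sigma'_gen d hd hd1]
    ring

lemma rat_int_of_integral {q : ℚ} (h : IsIntegral ℤ ((q : ℝ))) : ∃ n : ℤ, (n : ℚ) = q := by
  have h2 : IsIntegral ℤ q := by
    have : ((q : ℝ)) = algebraMap ℚ ℝ q := by simp [eq_ratCast]
    rw [this] at h
    exact IsIntegral.tower_bot_of_field h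
  exact IsIntegrallyClosed.isIntegral_iff.mp h2

lemma d_mod4_ne_zero (hd : Squarefree d) : d % 4 ≠ 0 := by
  intro h
  have h4 : 2 * 2 ∣ d := by omega
  have := hd 2 h4
  rw [Nat.isUnit_iff] at this
  omega

set_option maxHeartbeats 1000000 in
lemma key_int (hd : Squarefree d) (hd1 : 1 < d)
    (hΔ : 4 * 15 ^ 2 < Delta d) (x : Fd d)
    (hint : x ∈ integralClosure ℤ (Fd d))
    (h1 : |(x : ℝ)| ≤ 15) (h2 : |sigma' d hd hd1 x| ≤ 15) :
    ∃ n : ℤ, x = (n : Fd d) := by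
  obtain ⟨a, b, hco, hco'⟩ := coords d hd hd1 x
  have hxi : IsIntegral ℤ x := hint
  have hβ : IsIntegral ℤ ((x : ℝ)) := IsIntegral.map ((Fd d).val) hxi
  have hβ' : IsIntegral ℤ (sigma' d hd hd1 x) := IsIntegral.map (sigma' d hd hd1) hxi
  -- trace and norm are integers
  obtain ⟨tz, htz⟩ : ∃ n : ℤ, (n : ℚ) = 2 * a := by
    apply rat_int_of_integral
    have : (((2 * a : ℚ)) : ℝ) = (x : ℝ) + sigma' d hd hd1 x := by
      rw [hco, hco']; push_cast; ring
    rw [this]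
    exact hβ.add hβ'
  obtain ⟨mz, hmz⟩ : ∃ n : ℤ, (n : ℚ) = a ^ 2 - b ^ 2 * d := by
    apply rat_int_of_integral
    have : (((a ^ 2 - b ^ 2 * d : ℚ)) : ℝ) = (x : ℝ) * sigma' d hd hd1 x := by
      rw [hco, hco']
      push_cast
      have := sq_sqrtd d
      nlinarith [sq_sqrtd d]
    rw [this]
    exact hβ.mul hβ'
  by_cases hb : b = 0
  · -- x is rational, hence an integer
    obtain ⟨n, hn⟩ : ∃ n : ℤ, (n : ℚ) = a := by
      apply rat_int_of_integral
      have : ((a : ℚ) : ℝ) = (x : ℝ) := by rw [hco, hb]; push_cast; ring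
      rw [this]; exact hβ
    refine ⟨n, ?_⟩
    apply Subtype.ext
    show (x : ℝ) = ((n : Fd d) : ℝ)
    rw [hco, hb, ← hn]
    push_cast
    ring
  · -- contradiction
    exfalso
    obtain ⟨D, hD⟩ : ∃ D : ℤ, D = tz ^ 2 - 4 * mz := ⟨_, rfl⟩
    have hDq : (D : ℚ) = 4 * b ^ 2 * d := by
      push_cast [hD]
      rw [htz, hmz]
      ring
    have hq : ((2 * b * d : ℚ)) ^ 2 = ((D * d : ℤ) : ℚ) := by
      push_cast
      rw [hDq]
      ring
    obtain ⟨sz, hsz⟩ : ∃ n : ℤ, (n : ℚ) = 2 * b * d := by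
      apply rat_int_of_integral
      refine ⟨Polynomial.X ^ 2 - Polynomial.C (D * d : ℤ), Polynomial.monic_X_pow_sub_C _ (by norm_num), ?_⟩
      have h9 : (((2 * b * d : ℚ)) : ℝ) ^ 2 = ((D * d : ℤ) : ℝ) := by
        exact_mod_cast congrArg (fun q : ℚ => (q : ℝ)) hq
      show Polynomial.eval₂ (algebraMap ℤ ℝ) _ _ = 0
      rw [Polynomial.eval₂_sub, Polynomial.eval₂_pow, Polynomial.eval₂_X,
        Polynomial.eval₂_C, sub_eq_zero, eq_intCast]
      exact_mod_cast h9
    have hs2 : sz ^ 2 = D * d := by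
      have : ((sz : ℚ)) ^ 2 = ((D * d : ℤ) : ℚ) := by rw [hsz]; exact hq
      exact_mod_cast this
    have hdpos : (0 : ℤ) < d := by exact_mod_cast (by omega : 0 < d)
    have hDpos : 0 < D := by
      have : (0 : ℚ) < (D : ℚ) := by
        rw [hDq]
        have hb2 : (0:ℚ) < b ^ 2 := by
          rcases lt_trichotomy b 0 with h | h | h
          · nlinarith
          · exact absurd h hb
          · nlinarith
        have hdq : (0:ℚ) < (d:ℚ) := by exact_mod_cast hdpos
        nlinarith
      exact_mod_cast this
    have hD900 : D ≤ 900 := by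
      have habs : ((x:ℝ) - sigma' d hd hd1 x) ^ 2 ≤ 900 := by
        rw [abs_le] at h1 h2
        nlinarith [h1.1, h1.2, h2.1, h2.2]
      have hcalc : ((x:ℝ) - sigma' d hd hd1 x) ^ 2 = (D : ℝ) := by
        rw [hco, hco']
        have hq : ((D:ℚ) : ℝ) = ((4 * b ^ 2 * d : ℚ) : ℝ) := by rw [hDq]
        push_cast at hq
        rw [hq]
        nlinarith [sq_sqrtd d]
      rw [hcalc] at habs
      exact_mod_cast habs
    have hsq : Squarefree (d : ℤ) := Int.squarefree_natCast.mpr hd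
    have hdvd : (d : ℤ) ∣ sz ^ 2 := ⟨D, by linear_combination hs2⟩
    have hdsz : (d : ℤ) ∣ sz := (hsq.dvd_pow_iff_dvd (by norm_num)).mp hdvd
    obtain ⟨k, hk⟩ := hdsz
    have hDk : D = d * k ^ 2 := by
      rw [hk] at hs2
      have heq : (d:ℤ) * D = (d:ℤ) * ((d:ℤ) * k ^ 2) := by linear_combination -hs2
      exact mul_left_cancel₀ (by positivity) heq
    have hk0 : k ≠ 0 := by
      rintro rfl
      simp [hDk] at hDpos
    have hk1 : 1 ≤ k ^ 2 := by
      rcases le_or_gt 1 k with h | h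
      · nlinarith
      · have h2 : k ≤ -1 := by omega
        nlinarith
    rw [Delta] at hΔ
    by_cases h4 : d % 4 = 1
    · rw [if_pos h4] at hΔ
      have : (900 : ℤ) < d := by exact_mod_cast (by omega : 900 < d)
      nlinarith [hDk, hk1, hD900]
    · rw [if_neg h4] at hΔ
      have hd226 : (226 : ℤ) ≤ d := by exact_mod_cast (by omega : 226 ≤ d)
      rcases Int.even_or_odd k with ⟨j, hj⟩ | ⟨j, hj⟩
      · -- k even : D = 4 d j², contradiction with D ≤ 900
        have hj0 : j ≠ 0 := by rintro rfl; simp at hj; exact hk0 hj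
        have hj1 : 1 ≤ j ^ 2 := by
          have h1 : 1 ≤ |j| := Int.one_le_abs (by simpa using hj0)
          nlinarith [sq_abs j]
        rw [hj] at hDk
        nlinarith [hDk, hD900, hj1]
      · -- k odd : mod 4 contradiction
        have hd40 : d % 4 ≠ 0 := d_mod4_ne_zero d hd
        have hkey : tz ^ 2 - 4 * mz = (d:ℤ) * (2 * j + 1) ^ 2 := by
          rw [← hD, hDk, hj]
        rcases Int.even_or_odd tz with ⟨u, hu⟩ | ⟨u, hu⟩
        · have h4d : (4:ℤ) ∣ (d:ℤ) := by
            refine ⟨u ^ 2 - mz - (d:ℤ) * (j ^ 2 + j), ?_⟩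
            rw [hu] at hkey
            linear_combination -hkey
          have : (4:ℕ) ∣ d := by exact_mod_cast h4d
          omega
        · have h4d : (4:ℤ) ∣ ((d:ℤ) - 1) := by
            refine ⟨u ^ 2 + u - mz - (d:ℤ) * (j ^ 2 + j), ?_⟩
            rw [hu] at hkey
            linear_combination -hkey
          obtain ⟨c, hc⟩ := h4d
          have : (d : ℤ) = 4 * c + 1 := by linarith
          have hd4' : d % 4 = 1 := by omega
          exact h4 hd4'




variable {d}

lemma Q_zero (L : QuadLattice d) : (L.Q (0 : L.carrier) : Fd d) = 0 := by
  have h := L.B_add_left 0 0 0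
  rw [add_zero] at h
  have h0 : L.B (0 : L.carrier) 0 = 0 := left_eq_add.mp h
  rw [← L.B_self, h0]

lemma B_zero_left (L : QuadLattice d) (y : L.carrier) : L.B 0 y = 0 := by
  have h := L.B_add_left 0 0 y
  rw [add_zero] at h
  exact left_eq_add.mp h

lemma B_add_right (L : QuadLattice d) (x y z : L.carrier) :
    L.B x (y + z) = L.B x y + L.B x z := by
  rw [L.B_symm, L.B_add_left, L.B_symm y, L.B_symm z]

/-- `B (· , y)` as an additive monoid hom. -/
def Bhom (L : QuadLattice d) (y : L.carrier) : L.carrier →+ Fd d :=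
  AddMonoidHom.mk' (fun x => L.B x y) (fun a b => L.B_add_left a b y)

lemma B_zsmul_left (L : QuadLattice d) (n : ℤ) (x y : L.carrier) :
    L.B (n • x) y = (n : Fd d) * L.B x y := by
  have h := map_zsmul (Bhom L y) n x
  simpa [Bhom, AddMonoidHom.mk'_apply, zsmul_eq_mul] using h

lemma B_zsmul_right (L : QuadLattice d) (n : ℤ) (x y : L.carrier) :
    L.B x (n • y) = (n : Fd d) * L.B x y := by
  rw [L.B_symm, B_zsmul_left, L.B_symm]

lemma expansion (L : QuadLattice d) (p q : ℤ) (v w : L.carrier) :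
    (L.Q (p • v + q • w) : Fd d)
      = (p : Fd d) ^ 2 * (L.Q v : Fd d) + 2 * ((p : Fd d) * (q : Fd d)) * L.B v w
        + (q : Fd d) ^ 2 * (L.Q w : Fd d) := by
  rw [← L.B_self]
  simp only [L.B_add_left, B_add_right L, B_zsmul_left L, B_zsmul_right L, L.B_self]
  rw [L.B_symm w v]
  ring

set_option maxHeartbeats 1000000 in
lemma CS (L : QuadLattice d) (hpd : L.PosDef) (σ : Fd d →ₐ[ℚ] ℝ)
    (v w : L.carrier) (nv nw : ℤ)
    (hv : (L.Q v : Fd d) = (nv : Fd d)) (hw : (L.Q w : Fd d) = (nw : Fd d))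
    (hnv1 : 1 ≤ nv) (hnv2 : nv ≤ 15) (hnw1 : 1 ≤ nw) (hnw2 : nw ≤ 15) :
    |σ (L.B v w)| ≤ 15 := by
  set bb := σ (L.B v w) with hbb
  have hQnonneg : ∀ u : L.carrier, 0 ≤ σ (L.Q u : Fd d) := by
    intro u
    by_cases hu : u = 0
    · subst hu
      rw [Q_zero L]
      simp
    · exact (hpd u hu σ).le
  have key : ∀ p q : ℤ, 0 ≤ (nv : ℝ) * p ^ 2 + 2 * bb * (p * q) + (nw : ℝ) * q ^ 2 := by
    intro p q
    have h0 := hQnonneg (p • v + q • w)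
    rw [expansion L p q v w, hv, hw] at h0
    simp only [map_add, map_mul, map_pow, map_intCast, map_ofNat] at h0
    nlinarith [h0]
  have keyq : ∀ r : ℚ, 0 ≤ (nv : ℝ) * r ^ 2 + 2 * bb * r + (nw : ℝ) := by
    intro r
    have hden : (0:ℝ) < (r.den : ℝ) := by exact_mod_cast r.pos
    have h := key r.num r.den
    have hr : (r : ℝ) = (r.num : ℝ) / (r.den : ℝ) := by
      rw [Rat.cast_def]
    have expand : (nv : ℝ) * r ^ 2 + 2 * bb * r + (nw : ℝ)
        = ((nv : ℝ) * (r.num:ℝ) ^ 2 + 2 * bb * ((r.num:ℝ) * (r.den:ℝ)) + (nw:ℝ) * (r.den:ℝ) ^ 2)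
            / ((r.den:ℝ) ^ 2) := by
      rw [hr]
      field_simp
    rw [expand]
    exact div_nonneg (by exact_mod_cast h) (by positivity)
  have keyr : ∀ t : ℝ, 0 ≤ (nv : ℝ) * t ^ 2 + 2 * bb * t + (nw : ℝ) := by
    intro t
    have hC : IsClosed {t : ℝ | 0 ≤ (nv : ℝ) * t ^ 2 + 2 * bb * t + (nw : ℝ)} :=
      isClosed_le continuous_const (by fun_prop)
    have hsub : Set.range ((↑) : ℚ → ℝ) ⊆ {t : ℝ | 0 ≤ (nv : ℝ) * t ^ 2 + 2 * bb * t + (nw : ℝ)} := by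
      rintro _ ⟨r, rfl⟩
      exact keyq r
    have hdense : Dense (Set.range ((↑) : ℚ → ℝ)) := Rat.denseRange_cast
    have h1 : t ∈ closure (Set.range ((↑) : ℚ → ℝ)) := by
      rw [hdense.closure_eq]; trivial
    have h2 := closure_mono hsub h1
    rwa [hC.closure_eq] at h2
  have ha : (0:ℝ) < (nv : ℝ) := by exact_mod_cast (by omega : (0:ℤ) < nv)
  have hb2 : bb ^ 2 ≤ (nv : ℝ) * (nw : ℝ) := by
    have h := keyr (-bb / (nv : ℝ))
    have hcalc : (nv:ℝ) * (-bb / (nv:ℝ)) ^ 2 + 2 * bb * (-bb / (nv:ℝ)) + (nw:ℝ)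
        = (nw:ℝ) - bb ^ 2 / (nv:ℝ) := by
      field_simp
      ring
    rw [hcalc] at h
    have h3 : bb ^ 2 / (nv:ℝ) ≤ (nw:ℝ) := by linarith
    calc bb ^ 2 = bb ^ 2 / (nv:ℝ) * (nv:ℝ) := by field_simp
    _ ≤ (nw:ℝ) * (nv:ℝ) := by
        apply mul_le_mul_of_nonneg_right h3 ha.le
    _ = (nv:ℝ) * (nw:ℝ) := by ring
  have h225 : bb ^ 2 ≤ 225 := by
    have hv15 : (nv : ℝ) ≤ 15 := by exact_mod_cast hnv2
    have hw15 : (nw : ℝ) ≤ 15 := by exact_mod_cast hnw2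
    have hw0 : (0:ℝ) < (nw : ℝ) := by exact_mod_cast (by omega : (0:ℤ) < nw)
    nlinarith
  rw [abs_le]
  constructor <;> nlinarith


end SpanAux

/-- **Lemma (Statement 8).** Let `Δ_d > 4·15²`, let `L` be a positive definite
classic quadratic `𝒪_F`-lattice, `S = {v ∈ L : Q(v) ∈ ℤ, 1 ≤ Q(v) ≤ 15}`, and
`L₁` the `ℤ`-submodule of `L` generated by `S`. Then `B(L₁, L₁) ⊆ ℤ`. -/
theorem span_int_valued
    (d : ℕ) (hd : Squarefree d) (hd1 : 1 < d)
    (hΔ : 4 * 15 ^ 2 < Delta d)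
    (L : QuadLattice d) (hcl : L.IsClassic) (hpd : L.PosDef)
    (x y : L.carrier)
    (hx : x ∈ Submodule.span ℤ
      {v : L.carrier | ∃ n : ℤ, (L.Q v : Fd d) = (n : Fd d) ∧ 1 ≤ n ∧ n ≤ 15})
    (hy : y ∈ Submodule.span ℤ
      {v : L.carrier | ∃ n : ℤ, (L.Q v : Fd d) = (n : Fd d) ∧ 1 ≤ n ∧ n ≤ 15}) :
    ∃ n : ℤ, L.B x y = (n : Fd d) := by
  classical
  set S : Set L.carrier :=
    {v : L.carrier | ∃ n : ℤ, (L.Q v : Fd d) = (n : Fd d) ∧ 1 ≤ n ∧ n ≤ 15} with hS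
  have hgen : ∀ v ∈ S, ∀ w ∈ S, ∃ n : ℤ, L.B v w = (n : Fd d) := by
    rintro v ⟨nv, hv, hnv1, hnv2⟩ w ⟨nw, hw, hnw1, hnw2⟩
    apply SpanAux.key_int d hd hd1 hΔ
    · exact hcl v w
    · exact SpanAux.CS L hpd (Fd d).val v w nv nw hv hw hnv1 hnv2 hnw1 hnw2
    · exact SpanAux.CS L hpd (SpanAux.sigma' d hd hd1) v w nv nw hv hw hnv1 hnv2 hnw1 hnw2
  clear hcl hpd hΔ
  induction hx using Submodule.span_induction with
  | mem v hv =>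
    induction hy using Submodule.span_induction with
    | mem w hw => exact hgen v hv w hw
    | zero =>
      refine ⟨0, ?_⟩
      rw [L.B_symm, SpanAux.B_zero_left L]
      simp
    | add y1 y2 hy1 hy2 ih1 ih2 =>
      obtain ⟨n1, hn1⟩ := ih1
      obtain ⟨n2, hn2⟩ := ih2
      refine ⟨n1 + n2, ?_⟩
      rw [SpanAux.B_add_right L, hn1, hn2]
      push_cast
      ring
    | smul n y1 hy1 ih =>
      obtain ⟨n1, hn1⟩ := ih
      refine ⟨n * n1, ?_⟩
      rw [SpanAux.B_zsmul_right L, hn1]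
      push_cast
      ring
  | zero =>
    refine ⟨0, ?_⟩
    rw [SpanAux.B_zero_left L]
    simp
  | add x1 x2 hx1 hx2 ih1 ih2 =>
    obtain ⟨n1, hn1⟩ := ih1
    obtain ⟨n2, hn2⟩ := ih2
    refine ⟨n1 + n2, ?_⟩
    rw [L.B_add_left, hn1, hn2]
    push_cast
    ring
  | smul n x1 hx1 ih =>
    obtain ⟨n1, hn1⟩ := ih
    refine ⟨n * n1, ?_⟩
    rw [SpanAux.B_zsmul_left L, hn1]
    push_cast
    ring
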